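/- Let θ ∈ ℝ^n be a vector each of whose entries θ_i is 0 or 1, let Θ = Diag(θ) and Σ = I_n − Θ. Then for any matrix H ∈ ℝ^{m×n}, I_n − [Θ Hᵀ]([Θ; H][Θ Hᵀ])†[Θ; H] = Σ − ΣHᵀ(HΣHᵀ)†HΣ, where [Θ; H] denotes Θ stacked on top of H. -/

import Mathlib

open Matrix

/-- The four Moore–Penrose conditions characterizing the pseudo-inverse `P` of a real
square-indexed matrix `N`. -/
def IsMoorePenroseInv {k : Type*} [Fintype k] (N P : Matrix k k ℝ) : Prop :=
  N * P * N = N ∧ P * N * P = P ∧ (N * P)ᵀ = N * P ∧ (P * N)ᵀ = P * N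

/-- Cancellation for real matrices: `B Bᵀ Z = 0 → Bᵀ Z = 0`. -/
lemma mp_cancel {a b c : Type*} [Fintype a] [Fintype b] [Fintype c]
    (B : Matrix a b ℝ) (Z : Matrix a c ℝ) (h : B * Bᵀ * Z = 0) : Bᵀ * Z = 0 := by
  have := Matrix.self_mul_conjTranspose_mul_eq_zero B Z
  rw [conjTranspose_eq_transpose_of_trivial] at this
  exact this.mp h

/-- Uniqueness of the Moore–Penrose inverse. -/
lemma mp_unique {k : Type*} [Fintype k] (N P P' : Matrix k k ℝ)
    (hP : IsMoorePenroseInv N P) (hP' : IsMoorePenroseInv N P') : P = P' := by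
  obtain ⟨h1, h2, h3, h4⟩ := hP
  obtain ⟨g1, g2, g3, g4⟩ := hP'
  have e1 : N * P = N * P' := by
    calc N * P = (N * P') * (N * P) := by
          rw [show (N * P') * (N * P) = (N * P' * N) * P by
            simp only [Matrix.mul_assoc], g1]
      _ = (N * P')ᵀ * (N * P)ᵀ := by rw [g3, h3]
      _ = ((N * P) * (N * P'))ᵀ := (transpose_mul (N * P) (N * P')).symm ▸ rfl
      _ = (N * P')ᵀ := by
          rw [show (N * P) * (N * P') = (N * P * N) * P' by
            simp only [Matrix.mul_assoc], h1]
      _ = N * P' := g3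
  have e2 : P * N = P' * N := by
    calc P * N = (P * N) * (P' * N) := by
          rw [show (P * N) * (P' * N) = P * (N * P' * N) by
            simp only [Matrix.mul_assoc], g1]
      _ = (P * N)ᵀ * (P' * N)ᵀ := by rw [h4, g4]
      _ = ((P' * N) * (P * N))ᵀ := (transpose_mul (P' * N) (P * N)).symm ▸ rfl
      _ = (P' * N)ᵀ := by
          rw [show (P' * N) * (P * N) = P' * (N * P * N) by
            simp only [Matrix.mul_assoc], h1]
      _ = P' * N := g4
  calc P = P * N * P := h2.symm
    _ = P * N * P' := by rw [Matrix.mul_assoc, Matrix.mul_assoc, e1]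
    _ = P' * N * P' := by rw [e2]
    _ = P' := g2

/-- The Moore–Penrose inverse of a symmetric real matrix is symmetric. -/
lemma mp_symm {k : Type*} [Fintype k] (N P : Matrix k k ℝ)
    (hN : Nᵀ = N) (hP : IsMoorePenroseInv N P) : Pᵀ = P := by
  obtain ⟨h1, h2, h3, h4⟩ := hP
  refine mp_unique N Pᵀ P ⟨?_, ?_, ?_, ?_⟩ ⟨h1, h2, h3, h4⟩
  · calc N * Pᵀ * N
        = (N * P * N)ᵀ := by simp only [transpose_mul, hN, Matrix.mul_assoc]
      _ = Nᵀ := by rw [h1]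
      _ = N := hN
  · calc Pᵀ * N * Pᵀ
        = (P * N * P)ᵀ := by simp only [transpose_mul, hN, Matrix.mul_assoc]
      _ = Pᵀ := by rw [h2]
  · rw [show N * Pᵀ = (P * N)ᵀ by rw [transpose_mul, hN], transpose_transpose, h4]
  · rw [show Pᵀ * N = (N * P)ᵀ by rw [transpose_mul, hN], transpose_transpose, h3]

/-- Let `θ ∈ ℝⁿ` have all entries `0` or `1`, `Θ = Diag(θ)`,
`Σ = Iₙ − Θ`.  For any `H ∈ ℝ^{m×n}`,
`Iₙ − [Θ Hᵀ]([Θ; H][Θ Hᵀ])†[Θ; H] = Σ − ΣHᵀ(HΣHᵀ)†HΣ`. -/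
theorem stmt_4 {m n : ℕ} (θ : Fin n → ℝ) (hθ : ∀ i, θ i = 0 ∨ θ i = 1)
    (H : Matrix (Fin m) (Fin n) ℝ)
    (Mdag : Matrix (Fin n ⊕ Fin m) (Fin n ⊕ Fin m) ℝ)
    (hM : IsMoorePenroseInv
      (Matrix.fromRows (Matrix.diagonal θ) H * (Matrix.fromRows (Matrix.diagonal θ) H)ᵀ)
      Mdag)
    (Kdag : Matrix (Fin m) (Fin m) ℝ)
    (hK : IsMoorePenroseInv (H * (1 - Matrix.diagonal θ) * Hᵀ) Kdag) :
    1 - (Matrix.fromRows (Matrix.diagonal θ) H)ᵀ * Mdag * Matrix.fromRows (Matrix.diagonal θ) H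
      = (1 - Matrix.diagonal θ) -
        (1 - Matrix.diagonal θ) * Hᵀ * Kdag * H * (1 - Matrix.diagonal θ) := by
  set Θ : Matrix (Fin n) (Fin n) ℝ := Matrix.diagonal θ with hΘdef
  set S : Matrix (Fin n) (Fin n) ℝ := 1 - Θ with hSdef
  set A : Matrix (Fin n ⊕ Fin m) (Fin n) ℝ := Matrix.fromRows Θ H with hAdef
  -- basic facts about Θ and S
  have hΘt : Θᵀ = Θ := Matrix.diagonal_transpose θ
  have hθθ : (fun i => θ i * θ i) = θ := by
    funext i; rcases hθ i with h | h <;> simp [h]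
  have hΘ2 : Θ * Θ = Θ := by
    rw [hΘdef, Matrix.diagonal_mul_diagonal, hθθ]
  have hSt : Sᵀ = S := by rw [hSdef, transpose_sub, transpose_one, hΘt]
  have hS2 : S * S = S := by
    rw [hSdef]
    simp only [Matrix.sub_mul, Matrix.mul_sub, Matrix.one_mul, Matrix.mul_one, hΘ2,
      sub_self, sub_zero]
  have hSΘ : S * Θ = 0 := by
    rw [hSdef, Matrix.sub_mul, Matrix.one_mul, hΘ2, sub_self]
  -- transpose of A
  have hAt : Aᵀ = Matrix.fromCols Θ Hᵀ := by
    rw [hAdef, transpose_fromRows, hΘt]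
  -- symmetry of Mdag and Kdag
  have hMt : (A * Aᵀ)ᵀ = A * Aᵀ := by rw [transpose_mul, transpose_transpose]
  have hKt : (H * S * Hᵀ)ᵀ = H * S * Hᵀ := by
    simp only [transpose_mul, transpose_transpose, hSt, Matrix.mul_assoc]
  have hMdagT : Mdagᵀ = Mdag := mp_symm _ _ hMt hM
  have hKdagT : Kdagᵀ = Kdag := mp_symm _ _ hKt hK
  -- P and Q
  set P : Matrix (Fin n) (Fin n) ℝ := Aᵀ * Mdag * A with hPdef
  set Q : Matrix (Fin n) (Fin n) ℝ := Θ + S * Hᵀ * Kdag * (H * S) with hQdef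
  have hPt : Pᵀ = P := by
    rw [hPdef]
    simp only [transpose_mul, transpose_transpose, hMdagT, Matrix.mul_assoc]
  have hQt : Qᵀ = Q := by
    rw [hQdef]
    simp only [transpose_add, transpose_mul, transpose_transpose, hΘt, hSt, hKdagT,
      Matrix.mul_assoc]
  -- P * Aᵀ = Aᵀ
  have hPA : P * Aᵀ = Aᵀ := by
    have h0 : A * Aᵀ * (Mdag * (A * Aᵀ) - 1) = 0 := by
      rw [Matrix.mul_sub, Matrix.mul_one, sub_eq_zero]
      calc A * Aᵀ * (Mdag * (A * Aᵀ))
          = (A * Aᵀ) * Mdag * (A * Aᵀ) := by simp only [Matrix.mul_assoc]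
        _ = A * Aᵀ := hM.1
    have h1 : Aᵀ * (Mdag * (A * Aᵀ) - 1) = 0 := mp_cancel A _ h0
    rw [Matrix.mul_sub, Matrix.mul_one, sub_eq_zero] at h1
    calc P * Aᵀ = Aᵀ * (Mdag * (A * Aᵀ)) := by rw [hPdef]; simp only [Matrix.mul_assoc]
      _ = Aᵀ := h1
  -- extract PΘ = Θ and PHᵀ = Hᵀ
  have hPcols := hPA
  rw [hAt, mul_fromCols, fromCols_ext_iff] at hPcols
  obtain ⟨hPΘ, hPH⟩ := hPcols
  -- B = H * S, Bᵀ = S * Hᵀ, K = B * Bᵀ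
  have hBt : (H * S)ᵀ = S * Hᵀ := by rw [transpose_mul, hSt]
  have hKBB : H * S * Hᵀ = (H * S) * (H * S)ᵀ := by
    rw [hBt, show H * S * (S * Hᵀ) = H * (S * S) * Hᵀ by simp only [Matrix.mul_assoc], hS2]
  -- (S Hᵀ) Kdag (H S) (S Hᵀ)... key: SHᵀ * Kdag * (H*S*Hᵀ) = SHᵀ
  have hKey : S * Hᵀ * (Kdag * (H * S * Hᵀ)) = S * Hᵀ := by
    have h0 : (H * S) * (H * S)ᵀ * (Kdag * (H * S * Hᵀ) - 1) = 0 := by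
      rw [Matrix.mul_sub, Matrix.mul_one, sub_eq_zero, ← hKBB]
      calc H * S * Hᵀ * (Kdag * (H * S * Hᵀ))
          = (H * S * Hᵀ) * Kdag * (H * S * Hᵀ) := by simp only [Matrix.mul_assoc]
        _ = H * S * Hᵀ := hK.1
    have h1 := mp_cancel (H * S) _ h0
    rw [hBt, Matrix.mul_sub, Matrix.mul_one, sub_eq_zero] at h1
    exact h1
  -- Q * Θ = Θ and Q * Hᵀ = Hᵀ
  have hHSΘ : H * S * Θ = 0 := by
    rw [Matrix.mul_assoc, hSΘ, Matrix.mul_zero]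
  have hQΘ : Q * Θ = Θ := by
    rw [hQdef, Matrix.add_mul, hΘ2]
    rw [show S * Hᵀ * Kdag * (H * S) * Θ = S * Hᵀ * Kdag * (H * S * Θ) by
      simp only [Matrix.mul_assoc], hHSΘ, Matrix.mul_zero, add_zero]
  have hQH : Q * Hᵀ = Hᵀ := by
    rw [hQdef, Matrix.add_mul]
    have : S * Hᵀ * Kdag * (H * S) * Hᵀ = S * Hᵀ := by
      calc S * Hᵀ * Kdag * (H * S) * Hᵀ
          = S * Hᵀ * (Kdag * (H * S * Hᵀ)) := by simp only [Matrix.mul_assoc]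
        _ = S * Hᵀ := hKey
    rw [this, hSdef, Matrix.sub_mul, Matrix.one_mul, add_sub_cancel]
  -- Q * P = P
  have hQA : Q * Aᵀ = Aᵀ := by
    rw [hAt, mul_fromCols, hQΘ, hQH]
  have hQP : Q * P = P := by
    calc Q * P = (Q * Aᵀ) * (Mdag * A) := by rw [hPdef]; simp only [Matrix.mul_assoc]
      _ = Aᵀ * (Mdag * A) := by rw [hQA]
      _ = P := by rw [hPdef]; simp only [Matrix.mul_assoc]
  -- P * Q = Q
  have hPB : P * (S * Hᵀ) = S * Hᵀ := by
    rw [hSdef, Matrix.sub_mul, Matrix.one_mul, Matrix.mul_sub, hPH,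
      show P * (Θ * Hᵀ) = (P * Θ) * Hᵀ by simp only [Matrix.mul_assoc], hPΘ]
  have hPQ : P * Q = Q := by
    rw [hQdef, Matrix.mul_add, hPΘ]
    congr 1
    calc P * (S * Hᵀ * Kdag * (H * S))
        = (P * (S * Hᵀ)) * (Kdag * (H * S)) := by simp only [Matrix.mul_assoc]
      _ = (S * Hᵀ) * (Kdag * (H * S)) := by rw [hPB]
      _ = S * Hᵀ * Kdag * (H * S) := by simp only [Matrix.mul_assoc]
  -- conclude P = Q
  have hPQeq : P = Q := by
    calc P = Q * P := hQP.symm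
      _ = Qᵀ * Pᵀ := by rw [hQt, hPt]
      _ = (P * Q)ᵀ := (transpose_mul P Q).symm
      _ = Qᵀ := by rw [hPQ]
      _ = Q := hQt
  -- finish
  have : 1 - P = 1 - Q := by rw [hPQeq]
  rw [hPdef] at this
  rw [this, hQdef, hSdef]
  rw [show (1 : Matrix (Fin n) (Fin n) ℝ) - (Θ + (1 - Θ) * Hᵀ * Kdag * (H * (1 - Θ)))
      = (1 - Θ) - (1 - Θ) * Hᵀ * Kdag * (H * (1 - Θ)) by abel]
  simp only [Matrix.mul_assoc]
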